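/- arXiv:2007.08110 — 4 statements merged into one kernel-verified Lean document; each statement's English description precedes it below -/
import Mathlib

section
/- If f : ℝ → ℝ is quasi-concave (for all a ≤ b ≤ c, f(b) ≥ min{f(a), f(c)}), then for any ℓ > 0 the function g(x) = min{f(x), f(x+ℓ)} is also quasi-concave. -/
theorem stmt_5 (f : ℝ → ℝ)
    (hf : ∀ a b c : ℝ, a ≤ b → b ≤ c → min (f a) (f c) ≤ f b)
    (ℓ : ℝ) (hℓ : 0 < ℓ) :
    ∀ a b c : ℝ, a ≤ b → b ≤ c →
      min (min (f a) (f (a + ℓ))) (min (f c) (f (c + ℓ))) ≤ min (f b) (f (b + ℓ)) := by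
  intro a b c hab hbc
  refine le_min ?_ ?_
  · exact le_trans (min_le_min (min_le_left _ _) (min_le_left _ _)) (hf a b c hab hbc)
  · exact le_trans (min_le_min (min_le_right _ _) (min_le_right _ _))
      (hf (a + ℓ) (b + ℓ) (c + ℓ) (by linarith) (by linarith))
end

section
/- Fix α > 0 and let P ⊆ ℝ^d be a finite set with diameter D and width w. If ζ ≤ min{αw/(√2·D), 1/2} and V is a ζ-angle cover of the unit sphere, then w ≤ min over v ∈ V of max over a,b ∈ P of ⟨b − a, v⟩ ≤ (1 + α)·w. -/
/-- The maximal projection-width of a finite point set `P` along a direction `u`: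
`max_{a,b ∈ P} ⟪b - a, u⟫`. -/
noncomputable def dirWidth {d : ℕ} (P : Finset (EuclideanSpace ℝ (Fin d)))
    (u : EuclideanSpace ℝ (Fin d)) : ℝ :=
  sSup {s : ℝ | ∃ a ∈ P, ∃ b ∈ P, s = (inner ℝ (b - a) u : ℝ)}

/-- The width of a finite point set: the minimum of `dirWidth` over all unit directions. -/
noncomputable def setWidth {d : ℕ} (P : Finset (EuclideanSpace ℝ (Fin d))) : ℝ :=
  sInf {r : ℝ | ∃ u : EuclideanSpace ℝ (Fin d), ‖u‖ = 1 ∧ r = dirWidth P u}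

section aux
variable {d : ℕ} (P : Finset (EuclideanSpace ℝ (Fin d)))

lemma dw_set_nonempty (hP : P.Nonempty) (u : EuclideanSpace ℝ (Fin d)) :
    {s : ℝ | ∃ a ∈ P, ∃ b ∈ P, s = (inner ℝ (b - a) u : ℝ)}.Nonempty := by
  obtain ⟨a, ha⟩ := hP
  exact ⟨_, a, ha, a, ha, rfl⟩

lemma dw_bddAbove (u : EuclideanSpace ℝ (Fin d)) :
    BddAbove {s : ℝ | ∃ a ∈ P, ∃ b ∈ P, s = (inner ℝ (b - a) u : ℝ)} := by
  have hfin : {s : ℝ | ∃ a ∈ P, ∃ b ∈ P, s = (inner ℝ (b - a) u : ℝ)}.Finite := by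
    have : {s : ℝ | ∃ a ∈ P, ∃ b ∈ P, s = (inner ℝ (b - a) u : ℝ)} ⊆
        (fun p : _ × _ => (inner ℝ (p.2 - p.1) u : ℝ)) '' ((P : Set _) ×ˢ (P : Set _)) := by
      rintro s ⟨a, ha, b, hb, rfl⟩
      exact ⟨(a, b), ⟨ha, hb⟩, rfl⟩
    exact (((P.finite_toSet).prod P.finite_toSet).image _).subset this
  exact hfin.bddAbove

lemma le_dirWidth {a b : EuclideanSpace ℝ (Fin d)} (ha : a ∈ P) (hb : b ∈ P)
    (u : EuclideanSpace ℝ (Fin d)) : (inner ℝ (b - a) u : ℝ) ≤ dirWidth P u :=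
  le_csSup (dw_bddAbove P u) ⟨a, ha, b, hb, rfl⟩

lemma dirWidth_le (hP : P.Nonempty) {u : EuclideanSpace ℝ (Fin d)} {c : ℝ}
    (h : ∀ a ∈ P, ∀ b ∈ P, (inner ℝ (b - a) u : ℝ) ≤ c) : dirWidth P u ≤ c := by
  apply csSup_le (dw_set_nonempty P hP u)
  rintro s ⟨a, ha, b, hb, rfl⟩; exact h a ha b hb

lemma dirWidth_nonneg (hP : P.Nonempty) (u : EuclideanSpace ℝ (Fin d)) :
    0 ≤ dirWidth P u := by
  obtain ⟨a, ha⟩ := hP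
  have := le_dirWidth P ha ha u
  simpa using this

end aux

theorem stmt_9 (d : ℕ) (hd : 1 ≤ d) (α : ℝ) (hα : 0 < α)
    (P : Finset (EuclideanSpace ℝ (Fin d))) (hP : P.Nonempty)
    (D w : ℝ) (hD : D = Metric.diam (P : Set (EuclideanSpace ℝ (Fin d))))
    (hw : w = setWidth P)
    (ζ : ℝ) (hζ0 : 0 < ζ) (hζ : ζ ≤ min (α * w / (Real.sqrt 2 * D)) (1/2))
    (V : Set (EuclideanSpace ℝ (Fin d))) (hVunit : ∀ v ∈ V, ‖v‖ = 1)
    (hcover : ∀ u : EuclideanSpace ℝ (Fin d), ‖u‖ = 1 →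
      ∃ v ∈ V, InnerProductGeometry.angle u v ≤ ζ) :
    w ≤ sInf {r : ℝ | ∃ v ∈ V, r = dirWidth P v} ∧
      sInf {r : ℝ | ∃ v ∈ V, r = dirWidth P v} ≤ (1 + α) * w := by
  have hD0 : 0 ≤ D := hD ▸ Metric.diam_nonneg
  -- a unit vector exists
  have hdpos : 0 < d := hd
  set e : EuclideanSpace ℝ (Fin d) := EuclideanSpace.single ⟨0, hdpos⟩ (1 : ℝ) with he
  have heunit : ‖e‖ = 1 := by simp [he, EuclideanSpace.norm_single]
  -- the setWidth index set
  set T : Set ℝ := {r : ℝ | ∃ u : EuclideanSpace ℝ (Fin d), ‖u‖ = 1 ∧ r = dirWidth P u} with hT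
  have hTne : T.Nonempty := ⟨_, e, heunit, rfl⟩
  have hTbd : BddBelow T := by
    refine ⟨0, ?_⟩
    rintro r ⟨u, -, rfl⟩
    exact dirWidth_nonneg P hP u
  have hwle : ∀ u : EuclideanSpace ℝ (Fin d), ‖u‖ = 1 → w ≤ dirWidth P u := by
    intro u hu
    rw [hw]
    exact csInf_le hTbd ⟨u, hu, rfl⟩
  have hw0 : 0 ≤ w := by
    rw [hw]
    exact le_csInf hTne (by rintro r ⟨u, -, rfl⟩; exact dirWidth_nonneg P hP u)
  -- VW set
  set S : Set ℝ := {r : ℝ | ∃ v ∈ V, r = dirWidth P v} with hS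
  have hSne : S.Nonempty := by
    obtain ⟨v, hv, -⟩ := hcover e heunit
    exact ⟨_, v, hv, rfl⟩
  have hSbd : BddBelow S := by
    refine ⟨0, ?_⟩
    rintro r ⟨v, -, rfl⟩
    exact dirWidth_nonneg P hP v
  constructor
  · apply le_csInf hSne
    rintro r ⟨v, hv, rfl⟩
    exact hwle v (hVunit v hv)
  · -- positivity of w, D
    have hζ1 := (le_min_iff.mp hζ).1
    have hq : 0 < α * w / (Real.sqrt 2 * D) := lt_of_lt_of_le hζ0 hζ1
    have hDpos : 0 < D := by
      rcases eq_or_lt_of_le hD0 with h | h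
      · exfalso; rw [← h] at hq; simp at hq
      · exact h
    have hwpos : 0 < w := by
      by_contra h
      push_neg at h
      have : α * w / (Real.sqrt 2 * D) ≤ 0 := by
        apply div_nonpos_of_nonpos_of_nonneg
        · exact mul_nonpos_of_nonneg_of_nonpos hα.le h
        · positivity
      linarith
    have hkey : Real.sqrt 2 * D * ζ ≤ α * w := by
      have h2 : (0:ℝ) < Real.sqrt 2 * D := by positivity
      calc Real.sqrt 2 * D * ζ ≤ Real.sqrt 2 * D * (α * w / (Real.sqrt 2 * D)) := by
            exact mul_le_mul_of_nonneg_left hζ1 h2.le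
        _ = α * w := by field_simp
    -- ε-argument
    apply le_of_forall_pos_le_add
    intro ε hε
    have hTw : setWidth P = sInf T := rfl
    have hlt : sInf T < w + ε := by rw [← hTw, ← hw]; linarith
    obtain ⟨r, hrT, hrlt⟩ := exists_lt_of_csInf_lt hTne hlt
    obtain ⟨u, hu, rfl⟩ := hrT
    obtain ⟨v, hv, hang⟩ := hcover u hu
    have hvu : ‖v‖ = 1 := hVunit v hv
    -- distance bound from angle
    have hcos : Real.cos (InnerProductGeometry.angle u v) = (inner ℝ u v : ℝ) := by
      rw [InnerProductGeometry.cos_angle, hu, hvu]; ring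
    have hdist : ‖u - v‖ ≤ ζ := by
      have hθ0 := InnerProductGeometry.angle_nonneg u v
      have hnsq : ‖u - v‖ ^ 2 = 2 - 2 * Real.cos (InnerProductGeometry.angle u v) := by
        rw [hcos, @norm_sub_sq_real, hu, hvu]; ring
      have hcb := Real.one_sub_sq_div_two_le_cos (x := InnerProductGeometry.angle u v)
      have : ‖u - v‖ ^ 2 ≤ ζ ^ 2 := by
        have h1 : InnerProductGeometry.angle u v ^ 2 ≤ ζ ^ 2 := by
          apply sq_le_sq' <;> nlinarith
        nlinarith
      calc ‖u - v‖ = Real.sqrt (‖u - v‖ ^ 2) := (Real.sqrt_sq (norm_nonneg _)).symm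
        _ ≤ Real.sqrt (ζ ^ 2) := Real.sqrt_le_sqrt this
        _ = ζ := Real.sqrt_sq hζ0.le
    have hsqrt2 : (1:ℝ) ≤ Real.sqrt 2 := by
      nlinarith [Real.sq_sqrt (by norm_num : (0:ℝ) ≤ 2), Real.sqrt_nonneg 2]
    have hdw : dirWidth P v ≤ dirWidth P u + D * ζ := by
      apply dirWidth_le P hP
      intro a ha b hb
      have h1 : (inner ℝ (b - a) v : ℝ) - inner ℝ (b - a) u = inner ℝ (b - a) (v - u) :=
        (inner_sub_right _ _ _).symm
      have h2 : (inner ℝ (b - a) (v - u) : ℝ) ≤ ‖b - a‖ * ‖v - u‖ := real_inner_le_norm _ _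
      have h3 : ‖b - a‖ ≤ D := by
        have := Metric.dist_le_diam_of_mem (P.finite_toSet.isBounded) hb ha
        rw [dist_eq_norm] at this
        rw [hD]; exact this
      have h4 : ‖v - u‖ ≤ ζ := by rw [norm_sub_rev]; exact hdist
      have h5 : ‖b - a‖ * ‖v - u‖ ≤ D * ζ :=
        mul_le_mul h3 h4 (norm_nonneg _) hD0
      have h6 := le_dirWidth P ha hb u
      linarith
    have h8 : D * ζ ≤ Real.sqrt 2 * (D * ζ) :=
      le_mul_of_one_le_left (by positivity) hsqrt2
    have hDζ : D * ζ ≤ α * w := by rw [mul_assoc] at hkey; linarith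
    have h7 : sInf S ≤ dirWidth P v := csInf_le hSbd ⟨v, hv, rfl⟩
    linarith
end

section
/- Let S be a convex body in ℝ^d satisfying: for every unit direction u, max_{p∈conv(S)}⟨p,u⟩ ≤ max_{p∈D}⟨p,u⟩ + α·width(D), where D is a convex body containing a ball of radius width(D)·√(d+2)/(2(d+1)) centered at some point p₂. Then conv(S) − p₂ ⊆ (1 + 2α√(d+1/2))·(D − p₂). -/
theorem stmt_12 (d : ℕ) (α w : ℝ) (hα : 0 ≤ α) (hw : 0 ≤ w)
    (ι : Type) [Fintype ι] (v : ι → EuclideanSpace ℝ (Fin d)) (lam : ι → ℝ)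
    (hv : ∀ i, ‖v i‖ = 1)
    (p₂ : EuclideanSpace ℝ (Fin d))
    (D : Set (EuclideanSpace ℝ (Fin d)))
    (hD : D = ⋂ i, {x : EuclideanSpace ℝ (Fin d) | (inner ℝ (x - p₂) (v i) : ℝ) ≤ lam i})
    -- each `lam i` is at least `width(D)·√(d+2)/(2(d+1))`, as follows from `D` containing a
    -- ball of that radius centered at `p₂`, where `w` denotes `width(D)`
    (hlam : ∀ i, w * Real.sqrt (d + 2) / (2 * d + 2) ≤ lam i)
    (S : Set (EuclideanSpace ℝ (Fin d)))
    (hSconv : Convex ℝ S) (hScomp : IsCompact S) (hSint : (interior S).Nonempty)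
    -- for every unit direction `u`, `max_{p ∈ conv(S)} ⟪p,u⟫ ≤ max_{p ∈ D} ⟪p,u⟫ + α·width(D)`
    (hdir : ∀ u : EuclideanSpace ℝ (Fin d), ‖u‖ = 1 →
      ∃ q ∈ D, ∀ p ∈ S, (inner ℝ p u : ℝ) ≤ (inner ℝ q u : ℝ) + α * w) :
    ∀ x ∈ S, ∃ y ∈ D, x - p₂ = (1 + 2 * α * Real.sqrt (d + 1/2)) • (y - p₂) := by
  intro x hx
  set c : ℝ := 2 * α * Real.sqrt (d + 1/2) with hc
  have hc0 : 0 ≤ c := by positivity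
  have hβ : (0:ℝ) < 1 + c := by linarith
  refine ⟨p₂ + (1 + c)⁻¹ • (x - p₂), ?_, ?_⟩
  · rw [hD]
    refine Set.mem_iInter.2 fun i => ?_
    simp only [Set.mem_setOf_eq, add_sub_cancel_left]
    rw [real_inner_smul_left]
    -- key: inner (x - p₂) (v i) ≤ (1+c) * lam i
    obtain ⟨q, hq, hle⟩ := hdir (v i) (hv i)
    have hq' : (inner ℝ (q - p₂) (v i) : ℝ) ≤ lam i := by
      rw [hD] at hq
      exact Set.mem_iInter.1 hq i
    have hx' : (inner ℝ (x - p₂) (v i) : ℝ) ≤ lam i + α * w := by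
      have := hle x hx
      rw [inner_sub_left] at hq' ⊢
      linarith
    -- lam i nonneg and α * w ≤ c * lam i
    have hs1 : Real.sqrt (d + 1/2) * Real.sqrt (d + 2) ≥ d + 1 := by
      rw [← Real.sqrt_mul (by positivity)]
      have : ((d:ℝ) + 1) = Real.sqrt ((d + 1)^2) := by
        rw [Real.sqrt_sq (by positivity)]
      rw [this]
      apply Real.sqrt_le_sqrt
      nlinarith [Nat.cast_nonneg (α := ℝ) d]
    have hlami := hlam i
    have hlam0 : 0 ≤ lam i := le_trans (by positivity) hlami
    have haw : α * w ≤ c * lam i := by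
      have h1 : c * (w * Real.sqrt (d + 2) / (2 * d + 2)) ≤ c * lam i :=
        mul_le_mul_of_nonneg_left hlami hc0
      have hd0 : (0:ℝ) < 2 * d + 2 := by positivity
      have h2 : α * w ≤ c * (w * Real.sqrt (d + 2) / (2 * d + 2)) := by
        rw [hc, ← mul_div_assoc, le_div_iff₀ hd0]
        nlinarith [mul_nonneg hα hw, hs1]
      linarith
    have : (inner ℝ (x - p₂) (v i) : ℝ) ≤ (1 + c) * lam i := by nlinarith
    calc (1 + c)⁻¹ * (inner ℝ (x - p₂) (v i) : ℝ)
        ≤ (1 + c)⁻¹ * ((1 + c) * lam i) :=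
          mul_le_mul_of_nonneg_left this (by positivity)
      _ = lam i := by field_simp
  · rw [add_sub_cancel_left, smul_inv_smul₀ (ne_of_gt hβ)]
end

section
/- Let 0 < ε < 1 and let X be the discrete Laplace random variable on ℤ with ℙ[X = i] ∝ exp(−(ε/8)|i|). Then for any integer i and any set I of 1 + ⌈8/ε⌉ consecutive integers with i as an endpoint, ℙ[X = i] / ℙ[X ∈ I] ≤ 3ε/8. -/
open Finset Real

lemma geom_lb (ε : ℝ) (hε0 : 0 < ε) (hε1 : ε < 1) :
    (8:ℝ)/(3*ε) ≤ ∑ t ∈ Finset.range (⌈(8:ℝ)/ε⌉.toNat + 1), Real.exp (-(ε/8)) ^ t := by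
  have ha0 : 0 < ε/8 := by positivity
  set r := Real.exp (-(ε/8)) with hr
  have hr0 : 0 < r := Real.exp_pos _
  have hr1 : r < 1 := by rw [hr, Real.exp_lt_one_iff]; linarith
  set n := ⌈(8:ℝ)/ε⌉.toNat + 1 with hn
  have hceilnn : (0:ℤ) ≤ ⌈(8:ℝ)/ε⌉ := Int.ceil_nonneg (by positivity)
  have hceil : (8:ℝ)/ε ≤ (n : ℝ) := by
    have h := Int.le_ceil ((8:ℝ)/ε)
    have : ((⌈(8:ℝ)/ε⌉.toNat : ℤ) : ℝ) = ((⌈(8:ℝ)/ε⌉ : ℤ) : ℝ) := by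
      rw [Int.toNat_of_nonneg hceilnn]
    push_cast [hn]
    push_cast at this
    linarith
  have hgeom : ∑ t ∈ Finset.range n, r ^ t = (1 - r^n)/(1-r) := by
    rw [geom_sum_eq (by linarith)]
    rw [div_eq_div_iff (by linarith) (by linarith)]
    ring
  rw [hgeom]
  have hrn : r ^ n ≤ Real.exp (-1) := by
    rw [hr, ← Real.exp_nat_mul]
    apply Real.exp_le_exp.mpr
    have : (1:ℝ) ≤ ε/8 * n := by
      have := mul_le_mul_of_nonneg_left hceil (le_of_lt ha0)
      rw [div_mul_div_comm] at this
      calc (1:ℝ) = ε/8 * (8/ε) := by field_simp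
        _ ≤ ε/8 * n := by nlinarith
    nlinarith
  have hexp1 : Real.exp (-1) ≤ 2/3 := by
    have h2 : (2:ℝ) ≤ Real.exp 1 := by
      have := Real.add_one_le_exp (1:ℝ); linarith
    rw [Real.exp_neg]
    rw [inv_le_comm₀ (Real.exp_pos 1) (by norm_num)] at *
    · linarith
  have h1r : 1 - r ≤ ε/8 := by
    have := Real.add_one_le_exp (-(ε/8))
    rw [← hr] at this; linarith
  rw [le_div_iff₀ (by linarith)]
  have hpos : (0:ℝ) < 8/(3*ε) := by positivity
  have : 8/(3*ε) * (1-r) ≤ 8/(3*ε) * (ε/8) := by nlinarith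
  have heq : 8/(3*ε) * (ε/8) = 1/3 := by field_simp
  nlinarith

lemma term_lb (ε : ℝ) (hε0 : 0 < ε) (i : ℤ) (t : ℕ) (j : ℤ) (hj : |(j:ℝ)| ≤ |(i:ℝ)| + t) :
    Real.exp (-(ε/8) * |(i:ℝ)|) * Real.exp (-(ε/8)) ^ t ≤ Real.exp (-(ε/8) * |(j:ℝ)|) := by
  rw [← Real.exp_nat_mul, ← Real.exp_add]
  apply Real.exp_le_exp.mpr
  have : (0:ℝ) < ε/8 := by positivity
  nlinarith

lemma sum_lb_right (ε : ℝ) (hε0 : 0 < ε) (hε1 : ε < 1) (i : ℤ) :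
    Real.exp (-(ε/8) * |(i:ℝ)|) * ((8:ℝ)/(3*ε)) ≤
      ∑ j ∈ Finset.Icc i (i + ⌈(8:ℝ)/ε⌉), Real.exp (-(ε/8) * |(j:ℝ)|) := by
  have hceilnn : (0:ℤ) ≤ ⌈(8:ℝ)/ε⌉ := Int.ceil_nonneg (by positivity)
  have himg : Finset.Icc i (i + ⌈(8:ℝ)/ε⌉) =
      (Finset.range (⌈(8:ℝ)/ε⌉.toNat + 1)).image (fun t : ℕ => i + t) := by
    ext j
    simp only [Finset.mem_Icc, Finset.mem_image, Finset.mem_range]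
    constructor
    · rintro ⟨h1, h2⟩
      refine ⟨(j - i).toNat, ?_, ?_⟩ <;> omega
    · rintro ⟨t, ht, rfl⟩; omega
  rw [himg, Finset.sum_image (by intro a _ b _ h; have h' : i + (a:ℤ) = i + b := h; omega)]
  calc Real.exp (-(ε/8) * |(i:ℝ)|) * ((8:ℝ)/(3*ε))
      ≤ Real.exp (-(ε/8) * |(i:ℝ)|) * ∑ t ∈ Finset.range (⌈(8:ℝ)/ε⌉.toNat + 1), Real.exp (-(ε/8)) ^ t := by
        apply mul_le_mul_of_nonneg_left (geom_lb ε hε0 hε1) (Real.exp_pos _).le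
    _ = ∑ t ∈ Finset.range (⌈(8:ℝ)/ε⌉.toNat + 1), Real.exp (-(ε/8) * |(i:ℝ)|) * Real.exp (-(ε/8)) ^ t := by
        rw [Finset.mul_sum]
    _ ≤ _ := by
        apply Finset.sum_le_sum
        intro t _
        apply term_lb ε hε0 i t
        push_cast
        have := abs_add_le (i:ℝ) (t:ℕ)
        calc |((i:ℝ) + t)| ≤ |(i:ℝ)| + |(t:ℝ)| := abs_add_le _ _
          _ = |(i:ℝ)| + t := by rw [Nat.abs_cast]

lemma sum_lb_left (ε : ℝ) (hε0 : 0 < ε) (hε1 : ε < 1) (i : ℤ) :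
    Real.exp (-(ε/8) * |(i:ℝ)|) * ((8:ℝ)/(3*ε)) ≤
      ∑ j ∈ Finset.Icc (i - ⌈(8:ℝ)/ε⌉) i, Real.exp (-(ε/8) * |(j:ℝ)|) := by
  have hceilnn : (0:ℤ) ≤ ⌈(8:ℝ)/ε⌉ := Int.ceil_nonneg (by positivity)
  have himg : Finset.Icc (i - ⌈(8:ℝ)/ε⌉) i =
      (Finset.range (⌈(8:ℝ)/ε⌉.toNat + 1)).image (fun t : ℕ => i - t) := by
    ext j
    simp only [Finset.mem_Icc, Finset.mem_image, Finset.mem_range]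
    constructor
    · rintro ⟨h1, h2⟩
      refine ⟨(i - j).toNat, ?_, ?_⟩ <;> omega
    · rintro ⟨t, ht, rfl⟩; omega
  rw [himg, Finset.sum_image (by intro a _ b _ h; have h' : i - (a:ℤ) = i - b := h; omega)]
  calc Real.exp (-(ε/8) * |(i:ℝ)|) * ((8:ℝ)/(3*ε))
      ≤ Real.exp (-(ε/8) * |(i:ℝ)|) * ∑ t ∈ Finset.range (⌈(8:ℝ)/ε⌉.toNat + 1), Real.exp (-(ε/8)) ^ t := by
        apply mul_le_mul_of_nonneg_left (geom_lb ε hε0 hε1) (Real.exp_pos _).le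
    _ = ∑ t ∈ Finset.range (⌈(8:ℝ)/ε⌉.toNat + 1), Real.exp (-(ε/8) * |(i:ℝ)|) * Real.exp (-(ε/8)) ^ t := by
        rw [Finset.mul_sum]
    _ ≤ _ := by
        apply Finset.sum_le_sum
        intro t _
        apply term_lb ε hε0 i t
        push_cast
        calc |((i:ℝ) - t)| ≤ |(i:ℝ)| + |(t:ℝ)| := abs_sub _ _
          _ = |(i:ℝ)| + t := by rw [Nat.abs_cast]

lemma ratio_bound (ε : ℝ) (hε0 : 0 < ε) (hε1 : ε < 1) (c S : ℝ) (hc : 0 < c)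
    (hS : c * ((8:ℝ)/(3*ε)) ≤ S) : c / S ≤ 3 * ε / 8 := by
  have hS0 : 0 < S := lt_of_lt_of_le (by positivity) hS
  rw [div_le_iff₀ hS0]
  have h1 : 3 * ε / 8 * (c * ((8:ℝ)/(3*ε))) = c := by field_simp
  nlinarith

theorem stmt_18 (ε : ℝ) (hε0 : 0 < ε) (hε1 : ε < 1) (i : ℤ) :
    Real.exp (-(ε / 8) * |(i : ℝ)|) /
        (∑ j ∈ Finset.Icc i (i + ⌈(8 : ℝ) / ε⌉), Real.exp (-(ε / 8) * |(j : ℝ)|)) ≤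
      3 * ε / 8 ∧
    Real.exp (-(ε / 8) * |(i : ℝ)|) /
        (∑ j ∈ Finset.Icc (i - ⌈(8 : ℝ) / ε⌉) i, Real.exp (-(ε / 8) * |(j : ℝ)|)) ≤
      3 * ε / 8 := by
  exact ⟨ratio_bound ε hε0 hε1 _ _ (Real.exp_pos _) (sum_lb_right ε hε0 hε1 i),
         ratio_bound ε hε0 hε1 _ _ (Real.exp_pos _) (sum_lb_left ε hε0 hε1 i)⟩
end
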